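/- Let h : ℝ^d → ℝ be six times continuously differentiable (class C⁶) and let p ∈ ℝ^d be fixed. Then the function v ↦ −(1/12)·h(p + v/2) + (4/3)·h(p + v/4) − (5/2)·h(p) + (4/3)·h(p − v/4) − (1/12)·h(p − v/2) − (1/16)·D²_v h(p) is O(‖v‖⁶) as v → 0; that is, the five-point combination −(1/12)h(x_a) + (4/3)h(x_c) − (5/2)h(x_d) + (4/3)h(x_e) − (1/12)h(x_b), with x_d = (x_a+x_b)/2 = p, x_c = (3x_a+x_b)/4, x_e = (x_a+3x_b)/4 and v = x_a − x_b, equals (1/16)·D²_v h(x_d) up to a sixth-order error. -/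

import Mathlib

open Set Metric Asymptotics

section Helpers

variable {E : Type*} [NormedAddCommGroup E] [NormedSpace ℝ E]

private lemma itfd_comp_const_add {F : Type*} [NormedAddCommGroup F] [NormedSpace ℝ F]
    {f : E → F} {N : WithTop ℕ∞} (hf : ContDiff ℝ N f) (a : E) :
    ∀ {n : ℕ}, (n : WithTop ℕ∞) ≤ N → ∀ x : E,
      iteratedFDeriv ℝ n (fun y => f (a + y)) x = iteratedFDeriv ℝ n f (a + x) := by
  intro n
  induction n with
  | zero => intro _ x; ext m; simp
  | succ n IH =>
    intro hn x
    have hn' : (n : WithTop ℕ∞) ≤ N := le_trans (by exact_mod_cast Nat.le_succ n) hn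
    have hlt : (n : WithTop ℕ∞) < N := lt_of_lt_of_le (by exact_mod_cast Nat.lt_succ_self n) hn
    ext m
    rw [iteratedFDeriv_succ_apply_left, iteratedFDeriv_succ_apply_left]
    have heq : iteratedFDeriv ℝ n (fun z => f (a + z)) = fun y => iteratedFDeriv ℝ n f (a + y) :=
      funext (IH hn')
    rw [heq]
    have hdiff : DifferentiableAt ℝ (iteratedFDeriv ℝ n f) (a + x) :=
      hf.differentiable_iteratedFDeriv hlt (a + x)
    have h1 : HasFDerivAt (fun y : E => iteratedFDeriv ℝ n f (a + y))
        (fderiv ℝ (iteratedFDeriv ℝ n f) (a + x)) x := by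
      have h2 : HasFDerivAt (fun y : E => a + y) (ContinuousLinearMap.id ℝ E) x :=
        (hasFDerivAt_id x).const_add a
      have h3 := hdiff.hasFDerivAt.comp x h2
      simp only [ContinuousLinearMap.comp_id] at h3
      exact h3
    rw [h1.fderiv]

private lemma iteratedDeriv_line {f : E → ℝ} {N : WithTop ℕ∞} (hf : ContDiff ℝ N f) (p v : E)
    {n : ℕ} (hn : (n : WithTop ℕ∞) ≤ N) (t : ℝ) :
    iteratedDeriv n (fun s : ℝ => f (p + s • v)) t
      = iteratedFDeriv ℝ n f (p + t • v) (fun _ => v) := by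
  have hshift : ContDiff ℝ N (fun y : E => f (p + y)) :=
    hf.comp (contDiff_const.add contDiff_id)
  have hL : (fun s : ℝ => f (p + s • v))
      = (fun y : E => f (p + y)) ∘ (ContinuousLinearMap.toSpanSingleton ℝ v) := by
    funext s; simp [ContinuousLinearMap.toSpanSingleton_apply]
  rw [iteratedDeriv_eq_iteratedFDeriv, hL,
    ContinuousLinearMap.iteratedFDeriv_comp_right _ hshift _ hn]
  simp only [ContinuousMultilinearMap.compContinuousLinearMap_apply,
    ContinuousLinearMap.toSpanSingleton_apply, one_smul]
  rw [itfd_comp_const_add hf p hn]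

private lemma idw_eq {f : ℝ → ℝ} {N : WithTop ℕ∞} (hf : ContDiff ℝ N f) {s : Set ℝ}
    (hs : UniqueDiffOn ℝ s) {n : ℕ} (hn : (n : WithTop ℕ∞) ≤ N) {x : ℝ} (hx : x ∈ s) :
    iteratedDerivWithin n f s x = iteratedDeriv n f x := by
  have H := ((hf.contDiffOn.ftaylorSeriesWithin uniqueDiffOn_univ).mono
      (subset_univ s)).eq_iteratedFDerivWithin_of_uniqueDiffOn hn hs hx
  rw [ftaylorSeriesWithin_univ] at H
  rw [iteratedDerivWithin, iteratedDeriv, ← H]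
  rfl

end Helpers

/-- Five-point version (Proposition 2, corrected constant): for a `C⁶` function
`h : ℝ^d → ℝ` and fixed `p`, the five-point combination
`-(1/12)h(p+v/2) + (4/3)h(p+v/4) - (5/2)h(p) + (4/3)h(p-v/4) - (1/12)h(p-v/2)`
equals `(1/16)·D²_v h(p)` up to `O(‖v‖⁶)` as `v → 0`. -/
theorem stmt7 (d : ℕ) (h : EuclideanSpace ℝ (Fin d) → ℝ) (hh : ContDiff ℝ 6 h)
    (p : EuclideanSpace ℝ (Fin d)) :
    Asymptotics.IsBigO (nhds (0 : EuclideanSpace ℝ (Fin d)))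
      (fun v : EuclideanSpace ℝ (Fin d) =>
        -(1 / 12) * h (p + (1 / 2 : ℝ) • v) + (4 / 3) * h (p + (1 / 4 : ℝ) • v)
          - (5 / 2) * h p + (4 / 3) * h (p - (1 / 4 : ℝ) • v)
          - (1 / 12) * h (p - (1 / 2 : ℝ) • v)
          - (1 / 16) * iteratedFDeriv ℝ 2 h p ![v, v])
      (fun v => ‖v‖ ^ 6) := by
  obtain ⟨M, hM⟩ : ∃ M, ∀ x ∈ Metric.closedBall p 1, ‖iteratedFDeriv ℝ 6 h x‖ ≤ M :=
    (isCompact_closedBall p 1).exists_bound_of_continuousOn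
      (hh.continuous_iteratedFDeriv le_rfl).continuousOn
  have hM0 : 0 ≤ M := le_trans (norm_nonneg _) (hM p (mem_closedBall_self zero_le_one))
  rw [Asymptotics.isBigO_iff]
  refine ⟨M, ?_⟩
  filter_upwards [Metric.ball_mem_nhds (0 : EuclideanSpace ℝ (Fin d)) one_pos] with v hv
  have hv1 : ‖v‖ ≤ 1 := by
    have := mem_ball_iff_norm.mp hv
    simpa using this.le
  set ψ : ℝ → ℝ := fun t => h (p + t • v) + h (p + t • (-v)) with hψdef
  have hline : ∀ w : EuclideanSpace ℝ (Fin d), ContDiff ℝ 6 (fun t : ℝ => h (p + t • w)) :=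
    fun w => hh.comp (contDiff_const.add (contDiff_id.smul contDiff_const))
  have hψ : ContDiff ℝ 6 ψ := (hline v).add (hline (-v))
  -- derivatives of ψ
  have hDk : ∀ n : ℕ, (n : WithTop ℕ∞) ≤ 6 → ∀ t : ℝ, iteratedDeriv n ψ t
      = iteratedFDeriv ℝ n h (p + t • v) (fun _ => v)
        + iteratedFDeriv ℝ n h (p + t • (-v)) (fun _ => (-v)) := by
    intro n hn t
    have hsum : iteratedDeriv n ψ t
        = iteratedDeriv n (fun s : ℝ => h (p + s • v)) t
          + iteratedDeriv n (fun s : ℝ => h (p + s • (-v))) t := by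
      rw [← iteratedDerivWithin_univ, ← iteratedDerivWithin_univ, ← iteratedDerivWithin_univ]
      exact iteratedDerivWithin_add (mem_univ t) uniqueDiffOn_univ
        ((hline v).of_le hn).contDiffWithinAt ((hline (-v)).of_le hn).contDiffWithinAt
    rw [hsum, iteratedDeriv_line hh p v hn t, iteratedDeriv_line hh p (-v) hn t]
  have neg_apply : ∀ n : ℕ, ∀ x, (iteratedFDeriv ℝ n h x) (fun _ : Fin n => -v)
      = (-1 : ℝ) ^ n • (iteratedFDeriv ℝ n h x) (fun _ => v) := by
    intro n x
    have := (iteratedFDeriv ℝ n h x).map_smul_univ (fun _ : Fin n => (-1 : ℝ)) (fun _ => v)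
    simpa using this
  set A2 : ℝ := iteratedFDeriv ℝ 2 h p (fun _ => v) with hA2
  set A4 : ℝ := iteratedFDeriv ℝ 4 h p (fun _ => v) with hA4
  have hp0 : ∀ w : EuclideanSpace ℝ (Fin d), p + (0 : ℝ) • w = p := by
    intro w; rw [zero_smul, add_zero]
  have hD0 : ∀ n : ℕ, (n : WithTop ℕ∞) ≤ 6 → iteratedDeriv n ψ 0
      = (1 + (-1 : ℝ) ^ n) * iteratedFDeriv ℝ n h p (fun _ => v) := by
    intro n hn
    rw [hDk n hn 0, hp0, hp0, neg_apply]
    simp [smul_eq_mul]; ring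
  -- bound on the sixth derivative
  have hbound : ∀ y ∈ Icc (0 : ℝ) (1 / 2),
      ‖iteratedDerivWithin 6 ψ (Icc (0 : ℝ) (1 / 2)) y‖ ≤ 2 * M * ‖v‖ ^ 6 := by
    intro y hy
    have hUD : UniqueDiffOn ℝ (Icc (0 : ℝ) (1 / 2)) := uniqueDiffOn_Icc (by norm_num)
    rw [idw_eq hψ hUD le_rfl hy, hDk 6 le_rfl y]
    have key : ∀ w : EuclideanSpace ℝ (Fin d), ‖w‖ = ‖v‖ →
        ‖(iteratedFDeriv ℝ 6 h (p + y • w)) (fun _ => w)‖ ≤ M * ‖v‖ ^ 6 := by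
      intro w hw
      have hmem : p + y • w ∈ Metric.closedBall p 1 := by
        rw [mem_closedBall, dist_eq_norm]
        have : ‖p + y • w - p‖ = |y| * ‖w‖ := by
          rw [add_sub_cancel_left, norm_smul, Real.norm_eq_abs]
        rw [this, hw]
        have hy0 : |y| ≤ 1 / 2 := by
          rw [abs_of_nonneg hy.1]; exact hy.2
        nlinarith [norm_nonneg v]
      calc ‖(iteratedFDeriv ℝ 6 h (p + y • w)) (fun _ => w)‖
          ≤ ‖iteratedFDeriv ℝ 6 h (p + y • w)‖ * ∏ _i : Fin 6, ‖w‖ :=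
            (iteratedFDeriv ℝ 6 h (p + y • w)).le_opNorm _
        _ = ‖iteratedFDeriv ℝ 6 h (p + y • w)‖ * ‖v‖ ^ 6 := by
            rw [Finset.prod_const, hw]; simp
        _ ≤ M * ‖v‖ ^ 6 := by
            have := hM _ hmem
            have h6 : (0:ℝ) ≤ ‖v‖ ^ 6 := by positivity
            nlinarith
    calc ‖iteratedFDeriv ℝ 6 h (p + y • v) (fun _ => v)
          + iteratedFDeriv ℝ 6 h (p + y • (-v)) (fun _ => (-v))‖
        ≤ ‖iteratedFDeriv ℝ 6 h (p + y • v) (fun _ => v)‖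
          + ‖iteratedFDeriv ℝ 6 h (p + y • (-v)) (fun _ => (-v))‖ := norm_add_le _ _
      _ ≤ M * ‖v‖ ^ 6 + M * ‖v‖ ^ 6 := add_le_add (key v rfl) (key (-v) (norm_neg v))
      _ = 2 * M * ‖v‖ ^ 6 := by ring
  -- Taylor expansion of ψ on [0, 1/2]
  have hTay : ∀ c ∈ Icc (0 : ℝ) (1 / 2),
      |ψ c - (2 * h p + c ^ 2 * A2 + c ^ 4 / 12 * A4)| ≤ 2 * M * ‖v‖ ^ 6 * c ^ 6 / 120 := by
    intro c hc
    have hUD : UniqueDiffOn ℝ (Icc (0 : ℝ) (1 / 2)) := uniqueDiffOn_Icc (by norm_num)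
    have h0mem : (0 : ℝ) ∈ Icc (0 : ℝ) (1 / 2) := ⟨le_rfl, by norm_num⟩
    have hcd : ContDiffOn ℝ ((5 : ℕ) + 1) ψ (Icc (0 : ℝ) (1 / 2)) := by
      exact_mod_cast hψ.contDiffOn
    have hrem := taylor_mean_remainder_bound (f := ψ) (a := 0) (b := 1 / 2) (n := 5)
      (by norm_num) hcd hc hbound
    have hTeval : taylorWithinEval ψ 5 (Icc (0 : ℝ) (1 / 2)) 0 c
        = 2 * h p + c ^ 2 * A2 + c ^ 4 / 12 * A4 := by
      rw [taylor_within_apply]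
      have e0 := idw_eq hψ hUD (n := 0) (by norm_num) h0mem
      have e1 := idw_eq hψ hUD (n := 1) (by norm_num) h0mem
      have e2 := idw_eq hψ hUD (n := 2) (by norm_num) h0mem
      have e3 := idw_eq hψ hUD (n := 3) (by norm_num) h0mem
      have e4 := idw_eq hψ hUD (n := 4) (by norm_num) h0mem
      have e5 := idw_eq hψ hUD (n := 5) (by norm_num) h0mem
      have v0 : iteratedDeriv 0 ψ 0 = 2 * h p := by
        rw [hD0 0 (by norm_num), iteratedFDeriv_zero_apply]; ring
      have v1 : iteratedDeriv 1 ψ 0 = 0 := by rw [hD0 1 (by norm_num)]; norm_num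
      have v2 : iteratedDeriv 2 ψ 0 = 2 * A2 := by
        rw [hD0 2 (by norm_num), ← hA2]; norm_num
      have v3 : iteratedDeriv 3 ψ 0 = 0 := by rw [hD0 3 (by norm_num)]; norm_num
      have v4 : iteratedDeriv 4 ψ 0 = 2 * A4 := by
        rw [hD0 4 (by norm_num), ← hA4]; norm_num
      have v5 : iteratedDeriv 5 ψ 0 = 0 := by rw [hD0 5 (by norm_num)]; norm_num
      rw [Finset.sum_range_succ, Finset.sum_range_succ, Finset.sum_range_succ,
        Finset.sum_range_succ, Finset.sum_range_succ, Finset.sum_range_succ,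
        Finset.sum_range_zero, e0, e1, e2, e3, e4, e5, v0, v1, v2, v3, v4, v5]
      simp only [smul_eq_mul]
      norm_num [Nat.factorial]
      ring
    rw [hTeval] at hrem
    have habs : ‖ψ c - (2 * h p + c ^ 2 * A2 + c ^ 4 / 12 * A4)‖
        = |ψ c - (2 * h p + c ^ 2 * A2 + c ^ 4 / 12 * A4)| := rfl
    rw [habs] at hrem
    refine hrem.trans (le_of_eq ?_)
    norm_num [Nat.factorial]
  -- put everything together
  have hE1 := hTay (1 / 2) ⟨by norm_num, le_rfl⟩
  have hE2 := hTay (1 / 4) ⟨by norm_num, by norm_num⟩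
  have hψeq : ∀ c : ℝ, ψ c = h (p + c • v) + h (p - c • v) := by
    intro c
    rw [hψdef]
    simp only [smul_neg, ← sub_eq_add_neg]
  have hvv : iteratedFDeriv ℝ 2 h p ![v, v] = A2 := by
    rw [hA2]
    congr 1
    funext i
    fin_cases i <;> rfl
  have hT : -(1 / 12) * h (p + (1 / 2 : ℝ) • v) + (4 / 3) * h (p + (1 / 4 : ℝ) • v)
        - (5 / 2) * h p + (4 / 3) * h (p - (1 / 4 : ℝ) • v)
        - (1 / 12) * h (p - (1 / 2 : ℝ) • v)
        - (1 / 16) * iteratedFDeriv ℝ 2 h p ![v, v]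
      = -(1 / 12) * (ψ (1 / 2) - (2 * h p + (1 / 2 : ℝ) ^ 2 * A2 + (1 / 2 : ℝ) ^ 4 / 12 * A4))
        + (4 / 3) * (ψ (1 / 4) - (2 * h p + (1 / 4 : ℝ) ^ 2 * A2 + (1 / 4 : ℝ) ^ 4 / 12 * A4)) := by
    rw [hvv, hψeq (1 / 2), hψeq (1 / 4)]
    ring
  rw [hT]
  have habs : |(-(1 / 12) * (ψ (1 / 2) - (2 * h p + (1 / 2 : ℝ) ^ 2 * A2 + (1 / 2 : ℝ) ^ 4 / 12 * A4))
        + (4 / 3) * (ψ (1 / 4) - (2 * h p + (1 / 4 : ℝ) ^ 2 * A2 + (1 / 4 : ℝ) ^ 4 / 12 * A4)))|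
      ≤ M * ‖v‖ ^ 6 := by
    have habs1 := abs_add_le (-(1 / 12) * (ψ (1 / 2) - (2 * h p + (1 / 2 : ℝ) ^ 2 * A2 + (1 / 2 : ℝ) ^ 4 / 12 * A4)))
      ((4 / 3) * (ψ (1 / 4) - (2 * h p + (1 / 4 : ℝ) ^ 2 * A2 + (1 / 4 : ℝ) ^ 4 / 12 * A4)))
    rw [abs_mul, abs_mul] at habs1
    have c1 : |(-(1 / 12) : ℝ)| = 1 / 12 := by norm_num
    have c2 : |((4 / 3) : ℝ)| = 4 / 3 := by norm_num
    rw [c1, c2] at habs1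
    have h6 : (0 : ℝ) ≤ ‖v‖ ^ 6 := by positivity
    nlinarith [hE1, hE2, abs_nonneg (ψ (1 / 2) - (2 * h p + (1 / 2 : ℝ) ^ 2 * A2 + (1 / 2 : ℝ) ^ 4 / 12 * A4)),
      abs_nonneg (ψ (1 / 4) - (2 * h p + (1 / 4 : ℝ) ^ 2 * A2 + (1 / 4 : ℝ) ^ 4 / 12 * A4))]
  calc ‖(-(1 / 12) * (ψ (1 / 2) - (2 * h p + (1 / 2 : ℝ) ^ 2 * A2 + (1 / 2 : ℝ) ^ 4 / 12 * A4))
        + (4 / 3) * (ψ (1 / 4) - (2 * h p + (1 / 4 : ℝ) ^ 2 * A2 + (1 / 4 : ℝ) ^ 4 / 12 * A4)))‖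
      ≤ M * ‖v‖ ^ 6 := habs
    _ = M * ‖(‖v‖ ^ 6)‖ := by rw [Real.norm_eq_abs, abs_of_nonneg (by positivity)]
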